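/- Let 0 < p < 1, μ > 0, and let d be a real number with d > 1. The function r ↦ (d − 1)(1 − ((1 − p)(r/μ)/((1 − p)(r/μ) + p))^r) (real power) is strictly monotone increasing on (0, ∞). -/

import Mathlib

/-- Auxiliary: `r ↦ r * (log r - log (r + c))` is strictly antitone on `(0,∞)` for `c > 0`. -/
lemma aux_strictAntiOn (c : ℝ) (hc : 0 < c) :
    StrictAntiOn (fun r : ℝ => r * (Real.log r - Real.log (r + c))) (Set.Ioi (0 : ℝ)) := by
  apply strictAntiOn_of_deriv_neg (convex_Ioi (0 : ℝ))
  · apply ContinuousOn.mul continuousOn_id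
    apply ContinuousOn.sub
    · exact Real.continuousOn_log.mono (by intro x hx; exact ne_of_gt hx)
    · apply Real.continuousOn_log.comp (continuousOn_id.add continuousOn_const)
      intro x hx
      have : (0:ℝ) < x := hx
      simp only [Set.mem_compl_iff, Set.mem_singleton_iff, id]
      exact ne_of_gt (by simp; linarith)
  · intro x hx
    rw [interior_Ioi] at hx
    have hx0 : (0:ℝ) < x := hx
    have hxc : (0:ℝ) < x + c := by linarith
    have hD : HasDerivAt (fun r : ℝ => r * (Real.log r - Real.log (r + c)))
        (1 * (Real.log x - Real.log (x + c)) + x * (1/x - 1/(x+c))) x := by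
      have h1 : HasDerivAt (fun r : ℝ => Real.log r) (1/x) x := by
        simpa [one_div] using Real.hasDerivAt_log hx0.ne'
      have h2 : HasDerivAt (fun r : ℝ => Real.log (r + c)) (1/(x+c)) x := by
        have := (Real.hasDerivAt_log hxc.ne').comp x ((hasDerivAt_id x).add_const c)
        simpa [one_div, Function.comp_def] using this
      exact (hasDerivAt_id x).mul (h1.sub h2)
    rw [hD.deriv]
    have hne : -(c/(x+c)) ≠ 0 := by
      have : c/(x+c) > 0 := by positivity
      linarith
    have hexp : -(c/(x+c)) + 1 < Real.exp (-(c/(x+c))) := Real.add_one_lt_exp hne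
    have hval : -(c/(x+c)) + 1 = x/(x+c) := by field_simp; ring
    have hlog : Real.log (x/(x+c)) < -(c/(x+c)) := by
      have hpos : (0:ℝ) < x/(x+c) := by positivity
      calc Real.log (x/(x+c)) < Real.log (Real.exp (-(c/(x+c)))) := by
            apply Real.log_lt_log hpos
            rw [← hval]; exact hexp
        _ = -(c/(x+c)) := Real.log_exp _
    rw [Real.log_div hx0.ne' hxc.ne'] at hlog
    have hsimp : x * (1/x - 1/(x+c)) = c/(x+c) := by field_simp; ring
    rw [one_mul, hsimp]
    linarith

/-- For `0 < p < 1`, `μ > 0` and `d > 1`, the function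
`r ↦ (d − 1)(1 − ((1 − p)(r/μ)/((1 − p)(r/μ) + p))^r)` (real power) is strictly
monotone increasing on `(0, ∞)`. -/
theorem stmt_15 (p μ d : ℝ) (hp0 : 0 < p) (hp1 : p < 1) (hμ : 0 < μ) (hd : 1 < d) :
    StrictMonoOn
      (fun r : ℝ => (d - 1) * (1 - ((1 - p) * (r / μ) / ((1 - p) * (r / μ) + p)) ^ r))
      (Set.Ioi (0 : ℝ)) := by
  have hp' : (0:ℝ) < 1 - p := by linarith
  set c : ℝ := p * μ / (1 - p) with hcdef
  have hc : 0 < c := by positivity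
  have hbase : ∀ r : ℝ, 0 < r →
      (1 - p) * (r / μ) / ((1 - p) * (r / μ) + p) = r / (r + c) := by
    intro r hr
    have hden : (1 - p) * (r / μ) + p > 0 := by positivity
    have hrc : r + c > 0 := by positivity
    rw [div_eq_div_iff (ne_of_gt hden) (ne_of_gt hrc), hcdef]
    field_simp
  have hrw : ∀ r : ℝ, 0 < r →
      ((1 - p) * (r / μ) / ((1 - p) * (r / μ) + p)) ^ r
        = Real.exp (r * (Real.log r - Real.log (r + c))) := by
    intro r hr
    rw [hbase r hr]
    have hpos : (0:ℝ) < r / (r + c) := by positivity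
    rw [Real.rpow_def_of_pos hpos, Real.log_div hr.ne' (by positivity), mul_comm]
  intro a ha b hb hab
  have ha0 : (0:ℝ) < a := ha
  have hb0 : (0:ℝ) < b := hb
  simp only
  rw [hrw a ha0, hrw b hb0]
  have hF : b * (Real.log b - Real.log (b + c)) < a * (Real.log a - Real.log (a + c)) :=
    aux_strictAntiOn c hc ha hb hab
  have := Real.exp_lt_exp.mpr hF
  nlinarith [this, sub_pos.mpr hd]
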